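/- If N is a strongly 2-absorbing second submodule of M, then Ann_R(N) is a 2-absorbing ideal of R. -/
import Mathlib

open Pointwise

/-- A proper ideal `I` is 2-absorbing if `a*b*c ∈ I` implies `a*b ∈ I` or `a*c ∈ I`
or `b*c ∈ I`. -/
def Is2AbsorbingIdeal {R : Type*} [CommRing R] (I : Ideal R) : Prop :=
  I ≠ ⊤ ∧ ∀ a b c : R, a * b * c ∈ I → a * b ∈ I ∨ a * c ∈ I ∨ b * c ∈ I

/-- A nonzero submodule `N` is strongly 2-absorbing second (elementwise form):
for all `a b : R`, `a • b • N = a • N` or `a • b • N = b • N` or `a • b • N = ⊥`. -/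
def IsStrongly2AbsorbingSecond {R M : Type*} [CommRing R] [AddCommGroup M] [Module R M]
    (N : Submodule R M) : Prop :=
  N ≠ ⊥ ∧ ∀ a b : R, a • b • N = a • N ∨ a • b • N = b • N ∨ a • b • N = ⊥

lemma smul_eq_bot_iff_mem_ann {R M : Type*} [CommRing R] [AddCommGroup M] [Module R M]
    (r : R) (N : Submodule R M) : r • N = ⊥ ↔ r ∈ N.annihilator := by
  rw [Submodule.mem_annihilator]
  constructor
  · intro h m hm
    have : r • m ∈ r • N := Submodule.smul_mem_pointwise_smul m r N hm
    rw [h] at this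
    simpa using this
  · intro h
    rw [eq_bot_iff]
    intro x hx
    rw [← SetLike.mem_coe, Submodule.coe_pointwise_smul] at hx
    obtain ⟨n, hn, rfl⟩ := hx
    simpa using h n hn

theorem annihilator_2absorbing_of_strongly2AbsorbingSecond
    {R M : Type*} [CommRing R] [AddCommGroup M] [Module R M]
    (N : Submodule R M) (hN : IsStrongly2AbsorbingSecond N) :
    Is2AbsorbingIdeal N.annihilator := by
  obtain ⟨hne, h2⟩ := hN
  constructor
  · intro htop
    apply hne
    rw [eq_bot_iff]
    intro m hm
    have : (1 : R) ∈ N.annihilator := htop ▸ trivial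
    simpa using Submodule.mem_annihilator.mp this m hm
  · intro a b c habc
    have habc' : (a * b * c) • N = ⊥ := (smul_eq_bot_iff_mem_ann _ N).mpr habc
    rcases h2 a b with h | h | h
    · right; left
      rw [← smul_eq_bot_iff_mem_ann]
      have : c • (a • b • N) = c • (a • N) := by rw [h]
      rw [← mul_smul, ← mul_smul, ← mul_smul] at this
      rw [show c * a * b = a * b * c by ring, habc'] at this
      rw [show a * c = c * a by ring, ← this]
    · right; right
      rw [← smul_eq_bot_iff_mem_ann]
      have : c • (a • b • N) = c • (b • N) := by rw [h]
      rw [← mul_smul, ← mul_smul, ← mul_smul] at this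
      rw [show c * a * b = a * b * c by ring, habc'] at this
      rw [show b * c = c * b by ring, ← this]
    · left
      rw [← smul_eq_bot_iff_mem_ann, mul_smul]
      exact h
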